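/- Let f : (0,∞) → ℝ satisfy 0 < f(S_1) - f(S_2) ≤ S_2 - S_1 for all 0 < S_1 < S_2, with strict inequality f(S_1) - f(S_2) < S_2 - S_1 whenever S_2 ≥ c (for some fixed c ≥ 0), and equality f(S_1)-f(S_2) = S_2-S_1 when S_2 < c. Let ρ be a probability-type density on (0,∞) with finite first moment μ = ∫_0^∞ z ρ(z) dz, and let g(S) = β ∫_0^∞ f(Sz) ρ(z) dz where β > 0 satisfies βμ ≤ 1. Then for all 0 < S_1 < S_2: 0 < g(S_1) - g(S_2) < S_2 - S_1, provided ∫_0^∞ z ρ(z) dz splits with positive mass on both (0, c/S_2) and (c/S_2, ∞) or c = 0. -/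

import Mathlib

open MeasureTheory

/-- Key inductive step of the monotone-Lipschitz propagation: if `f` is strictly
decreasing with increment bounded by `S₂ - S₁` (strictly when `S₂ ≥ c`, with equality
when `S₂ < c`), and `g(S) = β ∫₀^∞ f(Sz) ρ(z) dz` with `β μ ≤ 1`
(`μ` the first moment of `ρ`), then `0 < g(S₁) - g(S₂) < S₂ - S₁` for `0 < S₁ < S₂`,
provided the first-moment integral has positive mass on both `(0, c/S₂)` and
`(c/S₂, ∞)`, or `c = 0`. -/
theorem stmt10 (c : ℝ) (hc : 0 ≤ c) (f : ℝ → ℝ)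
    (hf1 : ∀ S1 S2 : ℝ, 0 < S1 → S1 < S2 → 0 < f S1 - f S2 ∧ f S1 - f S2 ≤ S2 - S1)
    (hfs : ∀ S1 S2 : ℝ, 0 < S1 → S1 < S2 → c ≤ S2 → f S1 - f S2 < S2 - S1)
    (hfe : ∀ S1 S2 : ℝ, 0 < S1 → S1 < S2 → S2 < c → f S1 - f S2 = S2 - S1)
    (ρ : ℝ → ℝ) (hρ : ∀ z : ℝ, 0 < z → 0 < ρ z)
    (μ β : ℝ) (hβ : 0 < β)
    (hμ : μ = ∫ z in Set.Ioi (0:ℝ), z * ρ z)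
    (hμi : IntegrableOn (fun z => z * ρ z) (Set.Ioi 0))
    (hfi : ∀ S : ℝ, 0 < S → IntegrableOn (fun z => f (S * z) * ρ z) (Set.Ioi 0))
    (hβμ : β * μ ≤ 1) :
    ∀ S1 S2 : ℝ, 0 < S1 → S1 < S2 →
      (c = 0 ∨ (0 < ∫ z in Set.Ioo (0:ℝ) (c / S2), z * ρ z ∧
                0 < ∫ z in Set.Ioi (c / S2), z * ρ z)) →
      0 < (β * ∫ z in Set.Ioi (0:ℝ), f (S1 * z) * ρ z) -
            (β * ∫ z in Set.Ioi (0:ℝ), f (S2 * z) * ρ z) ∧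
      (β * ∫ z in Set.Ioi (0:ℝ), f (S1 * z) * ρ z) -
            (β * ∫ z in Set.Ioi (0:ℝ), f (S2 * z) * ρ z) < S2 - S1 := by

  intro S1 S2 hS1 h12 _
  have hS2 : 0 < S2 := hS1.trans h12
  set h : ℝ → ℝ := fun z => (f (S1 * z) - f (S2 * z)) * ρ z with hh
  have hhi : IntegrableOn h (Set.Ioi 0) := by
    have := (hfi S1 hS1).sub (hfi S2 hS2)
    simpa [hh, sub_mul, Pi.sub_def] using this
  have hpos : ∀ z ∈ Set.Ioi (0:ℝ), 0 < h z := by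
    intro z hz
    have hz0 : (0:ℝ) < z := hz
    have hlt : S1 * z < S2 * z := by nlinarith
    exact mul_pos ((hf1 _ _ (mul_pos hS1 hz0) hlt).1) (hρ z hz0)
  have key : (β * ∫ z in Set.Ioi (0:ℝ), f (S1 * z) * ρ z) -
      (β * ∫ z in Set.Ioi (0:ℝ), f (S2 * z) * ρ z)
      = β * ∫ z in Set.Ioi (0:ℝ), h z := by
    rw [← mul_sub, ← integral_sub (hfi S1 hS1) (hfi S2 hS2)]
    simp [hh, sub_mul]
  have hIh : 0 < ∫ z in Set.Ioi (0:ℝ), h z := by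
    rw [setIntegral_pos_iff_support_of_nonneg_ae]
    · have hsub : Set.Ioi (0:ℝ) ⊆ Function.support h ∩ Set.Ioi 0 := by
        intro z hz
        exact ⟨(hpos z hz).ne', hz⟩
      have : (0:ENNReal) < volume (Set.Ioi (0:ℝ)) := by
        simp [Real.volume_Ioi]
      exact this.trans_le (measure_mono hsub)
    · filter_upwards [ae_restrict_mem measurableSet_Ioi] with z hz
      exact (hpos z hz).le
    · exact hhi
  constructor
  · rw [key]; exact mul_pos hβ hIh
  · rw [key]
    -- upper bound: ∫ h < (S2 - S1) * μ
    set d : ℝ → ℝ := fun z => (S2 - S1) * (z * ρ z) - h z with hd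
    have hdi : IntegrableOn d (Set.Ioi 0) := (hμi.const_mul _).sub hhi
    have hdnn : ∀ z ∈ Set.Ioi (0:ℝ), 0 ≤ d z := by
      intro z hz
      have hz0 : (0:ℝ) < z := hz
      have hlt : S1 * z < S2 * z := by nlinarith
      have := (hf1 _ _ (mul_pos hS1 hz0) hlt).2
      have hb : f (S1 * z) - f (S2 * z) ≤ (S2 - S1) * z := by nlinarith
      have := mul_le_mul_of_nonneg_right hb (hρ z hz0).le
      simp only [hd, hh]
      nlinarith
    have hdpos : ∀ z, max 0 (c / S2) < z → 0 < d z := by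
      intro z hz
      have hz0 : (0:ℝ) < z := lt_of_le_of_lt (le_max_left _ _) hz
      have hcz : c / S2 < z := lt_of_le_of_lt (le_max_right _ _) hz
      have hcS : c ≤ S2 * z := by
        rw [div_lt_iff₀ hS2] at hcz
        nlinarith
      have hlt : S1 * z < S2 * z := by nlinarith
      have hb := hfs _ _ (mul_pos hS1 hz0) hlt hcS
      have hb' : f (S1 * z) - f (S2 * z) < (S2 - S1) * z := by nlinarith
      have := mul_lt_mul_of_pos_right hb' (hρ z hz0)
      simp only [hd, hh]
      nlinarith
    have hId : 0 < ∫ z in Set.Ioi (0:ℝ), d z := by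
      rw [setIntegral_pos_iff_support_of_nonneg_ae]
      · have hsub : Set.Ioi (max 0 (c / S2)) ⊆ Function.support d ∩ Set.Ioi 0 := by
          intro z hz
          refine ⟨(hdpos z hz).ne', ?_⟩
          exact lt_of_le_of_lt (le_max_left _ _) (Set.mem_Ioi.mp hz)
        have : (0:ENNReal) < volume (Set.Ioi (max 0 (c / S2))) := by
          simp [Real.volume_Ioi]
        exact this.trans_le (measure_mono hsub)
      · filter_upwards [ae_restrict_mem measurableSet_Ioi] with z hz
        exact hdnn z hz
      · exact hdi
    have hsplit : (∫ z in Set.Ioi (0:ℝ), d z)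
        = (S2 - S1) * μ - ∫ z in Set.Ioi (0:ℝ), h z := by
      rw [hd]
      rw [integral_sub (hμi.const_mul _) hhi, integral_const_mul, hμ]
    have hIhlt : (∫ z in Set.Ioi (0:ℝ), h z) < (S2 - S1) * μ := by linarith [hsplit ▸ hId]
    calc β * ∫ z in Set.Ioi (0:ℝ), h z < β * ((S2 - S1) * μ) := by
            exact mul_lt_mul_of_pos_left hIhlt hβ
      _ = (S2 - S1) * (β * μ) := by ring
      _ ≤ (S2 - S1) * 1 := mul_le_mul_of_nonneg_left hβμ (by linarith)
      _ = S2 - S1 := by ring
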